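/- Let x = (x_n) be a real sequence in ℓ³(ℕ) with Σ_{n=1}^∞ x_n³ = 1, and let (a_n), (b_n), (c_n) be bounded real sequences. Set a := Σ_n a_n x_n³, b := Σ_n b_n x_n³, c := Σ_n c_n x_n³. Then (Σ_n |a_n x_n − a x_n|³)^{1/3} · (Σ_n |b_n x_n − b x_n|³)^{1/3} · (Σ_n |c_n x_n − c x_n|³)^{1/3} ≥ | Σ_{n=1}^∞ (a_n − a)(b_n − b)(c_n − c)·x_n³ |, where the series on the right converges absolutely. -/

import Mathlib

open Real

set_option maxHeartbeats 1000000

private lemma aux_cube_summable (x : ℕ → ℝ) (hx3 : Summable (fun n => |x n| ^ 3))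
    (A : ℕ → ℝ) (hA : ∃ M : ℝ, ∀ n, |A n| ≤ M) (a : ℝ) :
    Summable (fun n => |(A n - a) * x n| ^ 3) := by
  obtain ⟨M, hM⟩ := hA
  refine Summable.of_nonneg_of_le (fun n => by positivity) (fun n => ?_)
    (hx3.mul_left ((M + |a|) ^ 3))
  calc |(A n - a) * x n| ^ 3 = |A n - a| ^ 3 * |x n| ^ 3 := by rw [abs_mul, mul_pow]
    _ ≤ (M + |a|) ^ 3 * |x n| ^ 3 :=
        mul_le_mul_of_nonneg_right
          (pow_le_pow_left₀ (abs_nonneg _)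
            ((abs_sub _ _).trans (by gcongr; exact hM n)) 3)
          (by positivity)

/-- On `ℓ³(ℕ)`: for a state `x` with `Σ xₙ³ = 1` and bounded real sequences
`(aₙ), (bₙ), (cₙ)` with 3-expectations `a, b, c`,
`(Σ |aₙxₙ − a xₙ|³)^{1/3}·(Σ |bₙxₙ − b xₙ|³)^{1/3}·(Σ |cₙxₙ − c xₙ|³)^{1/3}
  ≥ |Σₙ (aₙ − a)(bₙ − b)(cₙ − c) xₙ³|`,
where the series on the right converges absolutely. -/
theorem l3_uncertainty_product_lower_bound
    (x A B C : ℕ → ℝ)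
    (hx3 : Summable (fun n => |x n| ^ 3))
    (hx : ∑' n, (x n) ^ 3 = 1)
    (hA : ∃ M : ℝ, ∀ n, |A n| ≤ M)
    (hB : ∃ M : ℝ, ∀ n, |B n| ≤ M)
    (hC : ∃ M : ℝ, ∀ n, |C n| ≤ M)
    (a b c : ℝ)
    (ha : a = ∑' n, A n * (x n) ^ 3)
    (hb : b = ∑' n, B n * (x n) ^ 3)
    (hc : c = ∑' n, C n * (x n) ^ 3) :
    Summable (fun n => |(A n - a) * (B n - b) * (C n - c) * (x n) ^ 3|)
    ∧ (∑' n, |A n * x n - a * x n| ^ 3) ^ ((1 : ℝ) / 3)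
        * (∑' n, |B n * x n - b * x n| ^ 3) ^ ((1 : ℝ) / 3)
        * (∑' n, |C n * x n - c * x n| ^ 3) ^ ((1 : ℝ) / 3)
      ≥ |∑' n, (A n - a) * (B n - b) * (C n - c) * (x n) ^ 3| := by
  set f : ℕ → ℝ := fun n => |(A n - a) * x n| with hf_def
  set g : ℕ → ℝ := fun n => |(B n - b) * x n| with hg_def
  set h : ℕ → ℝ := fun n => |(C n - c) * x n| with hh_def
  have hf0 : ∀ n, 0 ≤ f n := fun n => abs_nonneg _
  have hg0 : ∀ n, 0 ≤ g n := fun n => abs_nonneg _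
  have hh0 : ∀ n, 0 ≤ h n := fun n => abs_nonneg _
  have hf3 : Summable (fun n => f n ^ 3) := aux_cube_summable x hx3 A hA a
  have hg3 : Summable (fun n => g n ^ 3) := aux_cube_summable x hx3 B hB b
  have hh3 : Summable (fun n => h n ^ 3) := aux_cube_summable x hx3 C hC c
  -- rpow versions
  have hrid : ∀ (u : ℕ → ℝ), (∀ n, 0 ≤ u n) → ∀ n, u n ^ (3 : ℝ) = u n ^ (3 : ℕ) := by
    intro u hu n
    rw [← Real.rpow_natCast (u n) 3]; norm_num
  have hf3' : Summable (fun n => f n ^ (3 : ℝ)) := by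
    simpa only [hrid f hf0] using hf3
  have hg3' : Summable (fun n => g n ^ (3 : ℝ)) := by
    simpa only [hrid g hg0] using hg3
  have hh3' : Summable (fun n => h n ^ (3 : ℝ)) := by
    simpa only [hrid h hh0] using hh3
  -- Cauchy–Schwarz for g^{3/2}, h^{3/2}
  have hcs := summable_and_inner_le_Lp_mul_Lq_tsum_of_nonneg (f := fun n => g n ^ ((3:ℝ)/2))
      (g := fun n => h n ^ ((3:ℝ)/2)) ((Real.holderConjugate_iff (p := 2) (q := 2)).mpr
        ⟨by norm_num, by norm_num⟩)
      (fun n => Real.rpow_nonneg (hg0 n) _) (fun n => Real.rpow_nonneg (hh0 n) _)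
      (by simpa only [← Real.rpow_mul (hg0 _),
            show (3:ℝ)/2 * 2 = 3 by norm_num] using hg3')
      (by simpa only [← Real.rpow_mul (hh0 _),
            show (3:ℝ)/2 * 2 = 3 by norm_num] using hh3')
  have hgh_eq : ∀ n, g n ^ ((3:ℝ)/2) * h n ^ ((3:ℝ)/2) = (g n * h n) ^ ((3:ℝ)/2) := by
    intro n; rw [← Real.mul_rpow (hg0 n) (hh0 n)]
  have hgh_sum : Summable (fun n => (g n * h n) ^ ((3:ℝ)/2)) := by
    simpa only [hgh_eq] using hcs.1
  have hsq : ∀ (u : ℕ → ℝ), (∀ n, 0 ≤ u n) →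
      (∑' n, (u n ^ ((3:ℝ)/2)) ^ (2:ℝ)) = ∑' n, u n ^ (3:ℝ) := fun u hu =>
    tsum_congr fun n => by rw [← Real.rpow_mul (hu n)]; norm_num
  have hcs2 : ∑' n, (g n * h n) ^ ((3:ℝ)/2)
      ≤ (∑' n, g n ^ (3:ℝ)) ^ ((1:ℝ)/2) * (∑' n, h n ^ (3:ℝ)) ^ ((1:ℝ)/2) := by
    have h' := hcs.2
    simp only [hgh_eq] at h'
    rwa [hsq g hg0, hsq h hh0] at h'
  -- Hölder 3, 3/2 for f and g*h
  have hhold := summable_and_inner_le_Lp_mul_Lq_tsum_of_nonneg (f := f) (g := fun n => g n * h n)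
      ((Real.holderConjugate_iff (p := 3) (q := (3:ℝ)/2)).mpr ⟨by norm_num, by norm_num⟩)
      hf0 (fun n => mul_nonneg (hg0 n) (hh0 n)) hf3' hgh_sum
  have habs : ∀ n, |(A n - a) * (B n - b) * (C n - c) * (x n) ^ 3|
      = f n * (g n * h n) := by
    intro n
    simp only [hf_def, hg_def, hh_def, ← abs_mul]
    ring_nf
  constructor
  · simpa only [habs] using hhold.1
  · -- main inequality
    have hterm : ∀ n, |A n * x n - a * x n| = f n := fun n => by
      simp only [hf_def, ← sub_mul]
    have htermB : ∀ n, |B n * x n - b * x n| = g n := fun n => by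
      simp only [hg_def, ← sub_mul]
    have htermC : ∀ n, |C n * x n - c * x n| = h n := fun n => by
      simp only [hh_def, ← sub_mul]
    have key : |∑' n, (A n - a) * (B n - b) * (C n - c) * (x n) ^ 3|
        ≤ ∑' n, f n * (g n * h n) := by
      have h' := norm_tsum_le_tsum_norm
        (f := fun n => (A n - a) * (B n - b) * (C n - c) * (x n) ^ 3)
        (by simpa only [Real.norm_eq_abs, habs] using hhold.1)
      simpa only [Real.norm_eq_abs, habs] using h'
    refine le_trans key ?_
    have hSg : (0:ℝ) ≤ ∑' n, g n ^ (3:ℝ) := tsum_nonneg fun n => Real.rpow_nonneg (hg0 n) _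
    have hSh : (0:ℝ) ≤ ∑' n, h n ^ (3:ℝ) := tsum_nonneg fun n => Real.rpow_nonneg (hh0 n) _
    have h2 : ∑' n, f n * (g n * h n)
        ≤ (∑' n, f n ^ (3:ℝ)) ^ ((1:ℝ)/3)
          * ((∑' n, g n ^ (3:ℝ)) ^ ((1:ℝ)/2) * (∑' n, h n ^ (3:ℝ)) ^ ((1:ℝ)/2))
            ^ ((1:ℝ)/((3:ℝ)/2)) :=
      hhold.2.trans
        (mul_le_mul_of_nonneg_left
          (Real.rpow_le_rpow
            (tsum_nonneg fun n => Real.rpow_nonneg (mul_nonneg (hg0 n) (hh0 n)) _)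
            hcs2 (by norm_num))
          (Real.rpow_nonneg (tsum_nonneg fun n => Real.rpow_nonneg (hf0 n) _) _))
    refine h2.trans (le_of_eq ?_)
    have hTf : (∑' n, f n ^ (3:ℝ)) = ∑' n, |A n * x n - a * x n| ^ 3 :=
      tsum_congr fun n => by rw [hrid f hf0 n, hterm n]
    have hTg : (∑' n, g n ^ (3:ℝ)) = ∑' n, |B n * x n - b * x n| ^ 3 :=
      tsum_congr fun n => by rw [hrid g hg0 n, htermB n]
    have hTh : (∑' n, h n ^ (3:ℝ)) = ∑' n, |C n * x n - c * x n| ^ 3 :=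
      tsum_congr fun n => by rw [hrid h hh0 n, htermC n]
    rw [Real.mul_rpow (Real.rpow_nonneg hSg _) (Real.rpow_nonneg hSh _),
      ← Real.rpow_mul hSg, ← Real.rpow_mul hSh,
      show (1:ℝ)/2 * ((1:ℝ)/((3:ℝ)/2)) = (1:ℝ)/3 by norm_num,
      hTf, hTg, hTh, mul_assoc]
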